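/- Let a : ℝ^d → ℝ be a nonnegative C² function with compact support. There exists δ > 0 such that for every λ > 0 and all x, y ∈ ℝ^d with λ|x−y|² ≤ δ, one has (1/2)(1 + λ a(x)) ≤ 1 + λ a(y) ≤ 2(1 + λ a(x)). (In other words, the weight 1 + λa is g-continuous, uniformly in λ.) -/

import Mathlib

/-- For a nonnegative `C²` function `a` with compact support, the weight
`1 + λ a` is `g`-continuous uniformly in `λ > 0`: there is `δ > 0` such that
`λ|x-y|² ≤ δ` implies `(1/2)(1 + λ a(x)) ≤ 1 + λ a(y) ≤ 2(1 + λ a(x))`. -/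
theorem weight_g_continuous (d : ℕ) (a : EuclideanSpace ℝ (Fin d) → ℝ)
    (ha : ContDiff ℝ 2 a) (hsupp : HasCompactSupport a) (hpos : ∀ x, 0 ≤ a x) :
    ∃ δ > (0:ℝ), ∀ lam : ℝ, 0 < lam → ∀ x y : EuclideanSpace ℝ (Fin d),
      lam * ‖x - y‖ ^ 2 ≤ δ →
        (1 / 2) * (1 + lam * a x) ≤ 1 + lam * a y ∧
          1 + lam * a y ≤ 2 * (1 + lam * a x) := by
  have hdiff : Differentiable ℝ a := ha.differentiable (by norm_num)
  have h1 : ContDiff ℝ 1 (fderiv ℝ a) := ha.fderiv_right (m := 1) (by norm_num)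
  obtain ⟨L, hLip⟩ := ContDiff.lipschitzWith_of_hasCompactSupport (hsupp.fderiv ℝ) h1 one_ne_zero
  set C : ℝ := (L : ℝ) + 1 with hCdef
  have hC : 0 < C := by positivity
  have hLC : ∀ z w, ‖fderiv ℝ a z - fderiv ℝ a w‖ ≤ C * ‖z - w‖ := by
    intro z w
    have := hLip.dist_le_mul z w
    rw [dist_eq_norm, dist_eq_norm] at this
    have h2 : (L:ℝ) * ‖z - w‖ ≤ C * ‖z - w‖ := by
      have : (L:ℝ) ≤ C := by simp [hCdef]
      nlinarith [norm_nonneg (z - w)]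
    linarith
  clear_value C
  -- Taylor estimate
  have key : ∀ x y : EuclideanSpace ℝ (Fin d),
      |a y - a x - (fderiv ℝ a x) (y - x)| ≤ C * ‖y - x‖ ^ 2 := by
    intro x y
    have hball : ∀ z ∈ Metric.closedBall x ‖y - x‖,
        HasFDerivWithinAt a (fderiv ℝ a z) (Metric.closedBall x ‖y - x‖) z :=
      fun z _ => (hdiff z).hasFDerivAt.hasFDerivWithinAt
    have hbound : ∀ z ∈ Metric.closedBall x ‖y - x‖,
        ‖fderiv ℝ a z - fderiv ℝ a x‖ ≤ C * ‖y - x‖ := by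
      intro z hz
      refine (hLC z x).trans ?_
      have : ‖z - x‖ ≤ ‖y - x‖ := by
        rw [Metric.mem_closedBall, dist_eq_norm] at hz; exact hz
      nlinarith
    have hx : x ∈ Metric.closedBall x ‖y - x‖ := Metric.mem_closedBall_self (norm_nonneg _)
    have hy : y ∈ Metric.closedBall x ‖y - x‖ := by
      rw [Metric.mem_closedBall, dist_eq_norm]
    have := (convex_closedBall x ‖y - x‖).norm_image_sub_le_of_norm_hasFDerivWithin_le'
        hball hbound hx hy
    rw [Real.norm_eq_abs] at this
    calc |a y - a x - (fderiv ℝ a x) (y - x)| ≤ C * ‖y - x‖ * ‖y - x‖ := this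
      _ = C * ‖y - x‖ ^ 2 := by ring
  -- gradient bound
  have grad : ∀ (x : EuclideanSpace ℝ (Fin d)) (u : EuclideanSpace ℝ (Fin d)),
      (fderiv ℝ a x u) ^ 2 ≤ 4 * C * a x * ‖u‖ ^ 2 := by
    intro x u
    rcases eq_or_ne u 0 with rfl | hu
    · simp
    · have hr : 0 < ‖u‖ := norm_pos_iff.mpr hu
      set c : ℝ := fderiv ℝ a x u with hc
      set r : ℝ := ‖u‖ with hrdef
      have hq : ∀ t : ℝ, 0 ≤ a x + t * c + C * t ^ 2 * r ^ 2 := by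
        intro t
        have h := key x (x + t • u)
        have hsub : (x + t • u) - x = t • u := by abel
        rw [hsub] at h
        have hmap : (fderiv ℝ a x) (t • u) = t * c := by
          rw [map_smul]; simp [hc]
        have hnorm : ‖t • u‖ ^ 2 = t ^ 2 * r ^ 2 := by
          rw [norm_smul]; simp [Real.norm_eq_abs, mul_pow, sq_abs, hrdef]
        rw [hmap, hnorm] at h
        have h0 := hpos (x + t • u)
        have := abs_le.mp h
        nlinarith
      have ht := hq (-(c) / (2 * C * r ^ 2))
      have hcr : (0:ℝ) < 2 * C * r ^ 2 := by positivity
      have heq : a x + (-(c) / (2 * C * r ^ 2)) * c + C * (-(c) / (2 * C * r ^ 2)) ^ 2 * r ^ 2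
          = a x - c ^ 2 / (4 * C * r ^ 2) := by
        field_simp
        ring
      rw [heq, sub_nonneg, div_le_iff₀ (by positivity)] at ht
      nlinarith [ht]
  -- main proof
  refine ⟨1 / (20 * C), by positivity, fun lam hlam x y hxy => ?_⟩
  set D : ℝ := fderiv ℝ a x (y - x) with hD
  set r : ℝ := ‖y - x‖ with hr
  have hkey := abs_le.mp (key x y)
  rw [← hr, ← hD] at hkey
  have hgrad : D ^ 2 ≤ 4 * C * a x * r ^ 2 := grad x (y - x)
  clear_value D r
  have hrxy : ‖x - y‖ = r := by rw [hr, norm_sub_rev]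
  rw [hrxy] at hxy
  have hrnn : 0 ≤ r := by rw [hr]; exact norm_nonneg _
  have hkey := abs_le.mp (key x y)
  rw [← hr, ← hD] at hkey
  have hax := hpos x
  have hay := hpos y
  -- AM-GM: lam * |D| ≤ lam * a x / 4 + 4 * C * lam * r ^ 2
  have hAM : lam * |D| ≤ lam * a x / 4 + 4 * C * lam * r ^ 2 := by
    have hB : 0 ≤ lam * a x / 4 + 4 * C * lam * r ^ 2 := by positivity
    have h1 : (lam * |D|) ^ 2 ≤ (lam * a x / 4 + 4 * C * lam * r ^ 2) ^ 2 := by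
      have hm := mul_le_mul_of_nonneg_left hgrad (sq_nonneg lam)
      have he : (lam * |D|) ^ 2 = lam ^ 2 * D ^ 2 := by rw [mul_pow, sq_abs]
      nlinarith [sq_nonneg (lam * a x / 4 - 4 * C * lam * r ^ 2)]
    exact (pow_le_pow_iff_left₀ (mul_nonneg hlam.le (abs_nonneg D)) hB (by norm_num)).mp h1
  have hrr : 4 * C * lam * r ^ 2 ≤ 4 * C * (1 / (20 * C)) := by nlinarith
  have hCr2 : C * lam * r ^ 2 ≤ C * (1 / (20 * C)) := by nlinarith
  have hCC : 4 * C * (1 / (20 * C)) = 1/5 := by field_simp; ring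
  have hCC2 : C * (1 / (20 * C)) = 1/20 := by field_simp
  have hDabs : -|D| ≤ D ∧ D ≤ |D| := ⟨neg_abs_le D, le_abs_self D⟩
  have hmain : lam * |a y - a x| ≤ (1/2) * (1 + lam * a x) := by
    have h2 : |a y - a x| ≤ |D| + C * r ^ 2 := by
      rcases hDabs with ⟨hd1, hd2⟩
      rcases hkey with ⟨hk1, hk2⟩
      rcases abs_cases (a y - a x) with ⟨h, _⟩ | ⟨h, _⟩ <;> linarith
    have h3 := mul_le_mul_of_nonneg_left h2 hlam.le
    rw [hCC] at hrr; rw [hCC2] at hCr2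
    linarith [h3, hAM, hrr, hCr2, mul_nonneg hlam.le hax]
  have hub : lam * (a y - a x) ≤ (1/2) * (1 + lam * a x) := by
    linarith [mul_le_mul_of_nonneg_left (le_abs_self (a y - a x)) hlam.le]
  have hlb : -((1/2) * (1 + lam * a x)) ≤ lam * (a y - a x) := by
    linarith [mul_le_mul_of_nonneg_left (neg_abs_le (a y - a x)) hlam.le]
  constructor <;> linarith
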